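/- Let (V, ‖·‖) be a normed real vector space which is a Ptolemy metric space, i.e. for all x,y,z,w ∈ V: ‖x−y‖·‖z−w‖ ≤ ‖x−z‖·‖y−w‖ + ‖x−w‖·‖y−z‖. Then the norm satisfies the parallelogram law, i.e. V is an inner product space. -/

import Mathlib

open Real

set_option maxHeartbeats 1000000

private def Qf (A B C : ℝ) (p : ℝ × ℝ) : ℝ := A*p.1^2 + 2*B*p.1*p.2 + C*p.2^2

private def Feas (n : ℝ × ℝ → ℝ) (A B C : ℝ) : Prop := ∀ p, (n p)^2 ≤ Qf A B C p



private lemma ptolemy_F2 {V : Type*} [NormedAddCommGroup V] [NormedSpace ℝ V]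
    (hpt : ∀ x y z w : V, ‖x - y‖ * ‖z - w‖ ≤ ‖x - z‖ * ‖y - w‖ + ‖x - w‖ * ‖y - z‖)
    (a b : V) : 4 * ‖a‖ * ‖b‖ ≤ ‖a + b‖^2 + ‖a - b‖^2 := by
  have h := hpt a (-a) b (-b)
  have h1 : a - (-a) = (2:ℝ) • a := by module
  have h2 : b - (-b) = (2:ℝ) • b := by module
  have h3 : (-a) - (-b) = -(a - b) := by module
  have h4 : a - (-b) = a + b := by module
  have h5 : (-a) - b = -(a+b) := by module
  rw [h1, h2, h3, h4, h5, norm_smul, norm_smul, norm_neg, norm_neg] at h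
  simp only [Real.norm_ofNat] at h
  nlinarith [h]

private lemma circ_compact : IsCompact {p : ℝ × ℝ | p.1^2 + p.2^2 = 1} := by
  apply IsCompact.of_isClosed_subset (isCompact_closedBall (0 : ℝ × ℝ) 1)
  · exact isClosed_eq (by continuity) continuous_const
  · intro p hp
    simp only [Set.mem_setOf_eq] at hp
    rw [Metric.mem_closedBall, dist_zero_right, Prod.norm_def]
    have h1 : ‖p.1‖ ≤ 1 := by rw [Real.norm_eq_abs]; nlinarith [sq_abs p.1, sq_nonneg p.2, abs_nonneg p.1]
    have h2 : ‖p.2‖ ≤ 1 := by rw [Real.norm_eq_abs]; nlinarith [sq_abs p.2, sq_nonneg p.1, abs_nonneg p.2]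
    exact max_le h1 h2

private lemma scale_circ (p : ℝ × ℝ) (hp : p ≠ 0) :
    ∃ (s : ℝ) (u : ℝ × ℝ), 0 < s ∧ u.1^2 + u.2^2 = 1 ∧ p = s • u := by
  have he : 0 < p.1^2 + p.2^2 := by
    rcases Prod.mk.injEq .. ▸ (by exact fun h => hp (Prod.ext h.1 h.2) : ¬(p.1 = 0 ∧ p.2 = 0)) with h
    by_contra hc
    push_neg at hc
    have h1 : p.1^2 + p.2^2 = 0 := le_antisymm hc (by positivity)
    have : p.1 = 0 ∧ p.2 = 0 := by constructor <;> nlinarith [sq_nonneg p.1, sq_nonneg p.2]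
    exact hp (Prod.ext this.1 this.2)
  set s := Real.sqrt (p.1^2 + p.2^2) with hs
  have hs0 : 0 < s := Real.sqrt_pos.2 he
  refine ⟨s, s⁻¹ • p, hs0, ?_, ?_⟩
  · have : (s⁻¹ • p).1 = s⁻¹ * p.1 := rfl
    have h2 : (s⁻¹ • p).2 = s⁻¹ * p.2 := rfl
    rw [this, h2]
    have hss : s^2 = p.1^2 + p.2^2 := Real.sq_sqrt he.le
    field_simp
    nlinarith [hss]
  · rw [smul_smul, mul_inv_cancel₀ hs0.ne', one_smul]

private lemma nonnegdet {A B C : ℝ} (h : ∀ p : ℝ × ℝ, 0 ≤ Qf A B C p) : B^2 ≤ A*C := by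
  have hA : 0 ≤ A := by have := h (1,0); simpa [Qf] using this
  have hC : 0 ≤ C := by have := h (0,1); simpa [Qf] using this
  rcases eq_or_lt_of_le hA with hA0 | hA0
  · have hB : B = 0 := by
      by_contra hB
      have ht := h (-(C+1)/(2*B), 1)
      simp only [Qf] at ht
      rw [← hA0] at ht
      have heq : 2 * B * (-(C+1)/(2*B)) * 1 = -(C+1) := by field_simp
      nlinarith [ht]
    rw [hB]; nlinarith
  · have := h (-B, A)
    simp only [Qf] at this
    nlinarith [this]

private lemma Qf_smul (A B C s : ℝ) (u : ℝ × ℝ) : Qf A B C (s • u) = s^2 * Qf A B C u := by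
  have h1 : (s • u).1 = s * u.1 := rfl
  have h2 : (s • u).2 = s * u.2 := rfl
  simp only [Qf, h1, h2]; ring

private lemma Qf_cont (A B C : ℝ) : Continuous (Qf A B C) := by
  have h : Qf A B C = fun p : ℝ × ℝ => A*p.1^2 + 2*B*p.1*p.2 + C*p.2^2 := rfl
  rw [h]; fun_prop

private lemma e_pos {p : ℝ × ℝ} (hp : p ≠ 0) : 0 < p.1^2 + p.2^2 := by
  rcases lt_or_eq_of_le (by positivity : (0:ℝ) ≤ p.1^2 + p.2^2) with h | h
  · exact h
  · exfalso
    apply hp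
    have h1 : p.1 = 0 := by nlinarith [sq_nonneg p.1, sq_nonneg p.2]
    have h2 : p.2 = 0 := by nlinarith [sq_nonneg p.1, sq_nonneg p.2]
    exact Prod.ext h1 h2

private lemma sinsum (x y : ℝ) : sin x + sin y = 2 * sin ((x+y)/2) * cos ((x-y)/2) := by
  have e1 := Real.sin_add ((x+y)/2) ((x-y)/2)
  have a1 : (x+y)/2 + (x-y)/2 = x := by ring
  rw [a1] at e1
  have e2 := Real.sin_sub ((x+y)/2) ((x-y)/2)
  have a2 : (x+y)/2 - (x-y)/2 = y := by ring
  rw [a2] at e2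
  rw [e1, e2]; ring

private lemma cossqhalf (x : ℝ) : cos (x/2)^2 = 1/2 + cos x / 2 := by
  have := Real.cos_sq (x/2)
  have a1 : 2*(x/2) = x := by ring
  rw [a1] at this
  exact this

private lemma seg_lemma (ν : ℝ → ℝ) (hcont : Continuous ν)
    (hmid : ∀ θ₁ θ₂, ν θ₁ = 1 → ν θ₂ = 1 → |θ₁ - θ₂| < π → ν ((θ₁+θ₂)/2) = 1)
    {a b : ℝ} (ha : ν a = 1) (hb : ν b = 1) (hab : a ≤ b) (hlen : b - a ≤ π/2) :
    ∀ x ∈ Set.Icc a b, ν x = 1 := by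
  have hdyad : ∀ nn : ℕ, ∀ k : ℕ, k ≤ 2^nn → ν (a + k*(b-a)/2^nn) = 1 := by
    intro nn
    induction nn with
    | zero =>
      intro k hk
      interval_cases k
      · simpa using ha
      · have : a + (1:ℕ)*(b-a)/2^(0:ℕ) = b := by push_cast; ring
        rw [this]; exact hb
    | succ nn ih =>
      intro k hk
      have h2p : (2:ℕ)^(nn+1) = 2*2^nn := by ring
      rcases Nat.even_or_odd k with ⟨j, hj⟩ | ⟨j, hj⟩
      · have hj2 : j ≤ 2^nn := by omega
        have : a + (k:ℝ)*(b-a)/2^(nn+1) = a + (j:ℝ)*(b-a)/2^nn := by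
          subst hj; push_cast; ring
        rw [this]; exact ih j hj2
      · have hj2 : j + 1 ≤ 2^nn := by omega
        have hx1 := ih j (by omega)
        have hx2 := ih (j+1) hj2
        have hpow : (0:ℝ) < 2^nn := by positivity
        have hdist : |(a + (j:ℝ)*(b-a)/2^nn) - (a + ((j:ℝ)+1)*(b-a)/2^nn)| < π := by
          have he : (a + (j:ℝ)*(b-a)/2^nn) - (a + ((j:ℝ)+1)*(b-a)/2^nn) = -((b-a)/2^nn) := by
            ring
          rw [he, abs_neg, abs_of_nonneg (div_nonneg (by linarith) (by positivity))]
          have h1 : (b-a)/2^nn ≤ (b-a) := by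
            apply div_le_self (by linarith) (by
              have : (1:ℝ) ≤ 2^nn := one_le_pow₀ (by norm_num)
              linarith)
          have := pi_pos
          linarith [pi_gt_three]
        have hres := hmid _ _ hx1 (by push_cast at hx2 ⊢; exact hx2) hdist
        have : ((a + (j:ℝ)*(b-a)/2^nn) + (a + ((j:ℝ)+1)*(b-a)/2^nn))/2
            = a + (k:ℝ)*(b-a)/2^(nn+1) := by
          subst hj; push_cast; ring
        rw [← this]; exact hres
  intro x hx
  rcases eq_or_lt_of_le hab with rfl | hlt
  · have : x = a := le_antisymm hx.2 hx.1
    rw [this]; exact ha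
  · -- x is a limit of dyadic points
    have hclosed : IsClosed {θ : ℝ | ν θ = 1} := isClosed_eq hcont continuous_const
    have hmem : x ∈ closure {θ : ℝ | ν θ = 1} := by
      rw [Metric.mem_closure_iff]
      intro ε hε
      obtain ⟨nn, hnn⟩ := pow_unbounded_of_one_lt ((b-a)/ε) (one_lt_two (α := ℝ))
      have hpow : (0:ℝ) < 2^nn := by positivity
      have hba : (0:ℝ) < b - a := by linarith
      have hsmall : (b-a)/2^nn < ε := by
        rw [div_lt_iff₀ hpow]
        rw [div_lt_iff₀ hε] at hnn
        calc b - a < 2^nn * ε := hnn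
          _ = ε * 2^nn := by ring
      set y := (x - a)*2^nn/(b-a) with hy
      have hy0 : 0 ≤ y := by
        apply div_nonneg (mul_nonneg (by linarith [hx.1]) hpow.le) hba.le
      have hyle : y ≤ 2^nn := by
        rw [hy, div_le_iff₀ hba]
        have := hx.2
        nlinarith [hpow]
      set k := ⌊y⌋₊ with hk
      have hkle : (k:ℝ) ≤ y := Nat.floor_le hy0
      have hylt : y < k + 1 := Nat.lt_floor_add_one y
      have hk2 : k ≤ 2^nn := by
        have h5 : (k:ℝ) ≤ ((2^nn : ℕ) : ℝ) := by push_cast; exact le_trans hkle hyle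
        exact_mod_cast h5
      refine ⟨a + k*(b-a)/2^nn, hdyad nn k hk2, ?_⟩
      rw [Real.dist_eq]
      have hle1 : (k:ℝ)*(b-a)/2^nn ≤ x - a := by
        rw [div_le_iff₀ hpow]
        rw [hy, le_div_iff₀ hba] at hkle
        nlinarith [hkle]
      have hle2 : x - a < ((k:ℝ)+1)*(b-a)/2^nn := by
        rw [lt_div_iff₀ hpow]
        rw [hy, div_lt_iff₀ hba] at hylt
        nlinarith [hylt]
      have habs : |x - (a + k*(b-a)/2^nn)| = x - a - (k:ℝ)*(b-a)/2^nn := by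
        rw [abs_of_nonneg (by linarith [hle1])]
        ring
      have hre : ((k:ℝ)+1)*(b-a)/2^nn = (k:ℝ)*(b-a)/2^nn + (b-a)/2^nn := by ring
      rw [habs]
      linarith [hle2, hsmall, hre]
    have := hclosed.closure_eq ▸ hmem
    exact this

section Main

variable {n : ℝ × ℝ → ℝ}

private lemma n_zero (hhom : ∀ (c : ℝ) (p : ℝ × ℝ), n (c • p) = |c| * n p) : n 0 = 0 := by
  have := hhom 0 0
  simpa using this

private lemma bounds (hcont : Continuous n) (hnn : ∀ p, 0 ≤ n p)
    (hzero : ∀ p, n p = 0 → p = 0)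
    (hhom : ∀ (c : ℝ) (p : ℝ × ℝ), n (c • p) = |c| * n p) :
    ∃ m M : ℝ, 0 < m ∧ 0 < M ∧
      (∀ p : ℝ × ℝ, m^2*(p.1^2+p.2^2) ≤ (n p)^2 ∧ (n p)^2 ≤ M^2*(p.1^2+p.2^2)) := by
  have hne : Set.Nonempty {p : ℝ × ℝ | p.1^2 + p.2^2 = 1} := ⟨(1,0), by norm_num⟩
  obtain ⟨pm, hpm, hmin⟩ := circ_compact.exists_isMinOn hne hcont.continuousOn
  obtain ⟨pM, hpM, hmax⟩ := circ_compact.exists_isMaxOn hne hcont.continuousOn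
  set m := n pm with hm
  set M := n pM with hM
  have hpm0 : pm ≠ 0 := by
    intro h
    rw [Set.mem_setOf_eq, h] at hpm; norm_num at hpm
  have hmpos : 0 < m := lt_of_le_of_ne (hnn pm) (fun h => hpm0 (hzero pm h.symm))
  have hMpos : 0 < M := lt_of_lt_of_le hmpos (hmin hpM)
  refine ⟨m, M, hmpos, hMpos, fun p => ?_⟩
  rcases eq_or_ne p 0 with rfl | hp
  · simp [n_zero hhom]
  · obtain ⟨s, u, hs, hu, rfl⟩ := scale_circ p hp
    have h1 : n (s • u) = s * n u := by rw [hhom, abs_of_pos hs]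
    have h2 : (s • u).1 = s * u.1 := rfl
    have h3 : (s • u).2 = s * u.2 := rfl
    have hml : m ≤ n u := hmin hu
    have hMu : n u ≤ M := hmax hu
    have key : (s*u.1)^2 + (s*u.2)^2 = s^2 := by linear_combination s^2 * hu
    have hsq1 : m^2 ≤ (n u)^2 := by nlinarith [hmpos]
    have hsq2 : (n u)^2 ≤ M^2 := by nlinarith [hnn u]
    rw [h1, h2, h3, key]
    constructor
    · calc m^2 * s^2 ≤ (n u)^2 * s^2 := by nlinarith [sq_nonneg s]
        _ = (s * n u)^2 := by ring
    · calc (s * n u)^2 = (n u)^2 * s^2 := by ring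
        _ ≤ M^2 * s^2 := by nlinarith [sq_nonneg s]

private lemma exists_min_form (hnn : ∀ p, 0 ≤ n p)
    {m M : ℝ} (hm : 0 < m) (hM : 0 < M)
    (hb : ∀ p : ℝ × ℝ, m^2*(p.1^2+p.2^2) ≤ (n p)^2 ∧ (n p)^2 ≤ M^2*(p.1^2+p.2^2)) :
    ∃ A B C, Feas n A B C ∧ ∀ A' B' C', Feas n A' B' C' → A + C ≤ A' + C' := by
  classical
  set S : Set (ℝ × ℝ × ℝ) :=
    {T | Feas n T.1 T.2.1 T.2.2 ∧ T.1 + T.2.2 ≤ 2*M^2} with hS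
  have hfeas0 : Feas n (M^2) 0 (M^2) := by
    intro p
    have := (hb p).2
    simp only [Qf]
    nlinarith [this]
  have hSne : S.Nonempty := ⟨(M^2, 0, M^2), hfeas0, le_of_eq (by ring)⟩
  have hclosed : IsClosed S := by
    have h1 : IsClosed {T : ℝ × ℝ × ℝ | Feas n T.1 T.2.1 T.2.2} := by
      have heq : {T : ℝ × ℝ × ℝ | Feas n T.1 T.2.1 T.2.2} =
          ⋂ p : ℝ × ℝ, {T : ℝ × ℝ × ℝ | (n p)^2 ≤ Qf T.1 T.2.1 T.2.2 p} := by
        ext T; simp [Feas, Set.mem_iInter, Set.mem_setOf_eq]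
      rw [heq]
      refine isClosed_iInter (fun p => isClosed_le continuous_const ?_)
      simp only [Qf]
      exact ((continuous_fst.mul continuous_const).add
        (((continuous_const.mul (continuous_fst.comp continuous_snd)).mul
          continuous_const).mul continuous_const)).add
        (((continuous_snd.comp continuous_snd).mul continuous_const))
    have h2 : IsClosed {T : ℝ × ℝ × ℝ | T.1 + T.2.2 ≤ 2*M^2} :=
      isClosed_le (continuous_fst.add (continuous_snd.comp continuous_snd)) continuous_const
    exact h1.inter h2
  have hmem : ∀ T ∈ S, T ∈ Set.Icc (m^2) (2*M^2) ×ˢ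
      (Set.Icc (-(2*M^2)) (2*M^2) ×ˢ Set.Icc (m^2) (2*M^2)) := by
    rintro ⟨A, B, C⟩ ⟨hfeas, htr⟩
    simp only at hfeas htr
    have h1 := hfeas (1,0)
    have h2 := (hb (1,0)).1
    have h3 := hfeas (0,1)
    have h4 := (hb (0,1)).1
    simp only [Qf] at h1 h3
    norm_num at h1 h2 h3 h4
    have hA : m^2 ≤ A := le_trans h2 h1
    have hC : m^2 ≤ C := le_trans h4 h3
    have hA2 : A ≤ 2*M^2 := by nlinarith [hC, htr, hm]
    have hC2 : C ≤ 2*M^2 := by nlinarith [hA, htr, hm]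
    have hBsq : B^2 ≤ A*C := by
      apply nonnegdet
      intro p
      exact le_trans (sq_nonneg (n p)) (hfeas p)
    have hM2pos : (0:ℝ) < 2*M^2 := by positivity
    have hACle : A*C ≤ (2*M^2)*(2*M^2) :=
      mul_le_mul hA2 hC2 (by nlinarith [hm]) hM2pos.le
    have hB1 : -(2*M^2) ≤ B := by nlinarith [sq_nonneg (B + 2*M^2)]
    have hB2 : B ≤ 2*M^2 := by nlinarith [sq_nonneg (B - 2*M^2)]
    exact ⟨⟨hA, hA2⟩, ⟨hB1, hB2⟩, hC, hC2⟩
  have hcompact : IsCompact S :=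
    IsCompact.of_isClosed_subset
      ((isCompact_Icc).prod ((isCompact_Icc).prod (isCompact_Icc))) hclosed hmem
  have hcf : Continuous fun T : ℝ × ℝ × ℝ => T.1 + T.2.2 :=
    continuous_fst.add (continuous_snd.comp continuous_snd)
  obtain ⟨T, hTS, hTmin⟩ := hcompact.exists_isMinOn hSne hcf.continuousOn
  refine ⟨T.1, T.2.1, T.2.2, hTS.1, ?_⟩
  intro A' B' C' hfeas'
  by_contra hlt
  push_neg at hlt
  have hmem' : (A', B', C') ∈ S := ⟨hfeas', le_trans hlt.le hTS.2⟩
  have := isMinOn_iff.1 hTmin _ hmem'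
  simp only at this
  linarith

private lemma feas_of_circ (hhom : ∀ (c : ℝ) (p : ℝ × ℝ), n (c • p) = |c| * n p)
    {A B C : ℝ} (h : ∀ u : ℝ × ℝ, u.1^2 + u.2^2 = 1 → (n u)^2 ≤ Qf A B C u) :
    Feas n A B C := by
  intro p
  rcases eq_or_ne p 0 with rfl | hp
  · simp [n_zero hhom, Qf]
  · obtain ⟨s, u, hs, hu, rfl⟩ := scale_circ p hp
    rw [Qf_smul, hhom, abs_of_pos hs, mul_pow]
    have := h u hu
    nlinarith [sq_nonneg s]

private lemma exists_contact (hcont : Continuous n)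
    (hhom : ∀ (c : ℝ) (p : ℝ × ℝ), n (c • p) = |c| * n p)
    {A B C : ℝ} (hfeas : Feas n A B C)
    (hminimal : ∀ A' B' C', Feas n A' B' C' → A + C ≤ A' + C') :
    ∃ w : ℝ × ℝ, w.1^2 + w.2^2 = 1 ∧ (n w)^2 = Qf A B C w := by
  by_contra hc
  push_neg at hc
  have hlt : ∀ u : ℝ × ℝ, u.1^2+u.2^2 = 1 → (n u)^2 < Qf A B C u :=
    fun u hu => lt_of_le_of_ne (hfeas u) (hc u hu)
  have hgc : Continuous fun p : ℝ × ℝ => Qf A B C p - (n p)^2 :=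
    (Qf_cont A B C).sub (by fun_prop)
  have hne : Set.Nonempty {p : ℝ × ℝ | p.1^2 + p.2^2 = 1} := ⟨(1,0), by norm_num⟩
  obtain ⟨pg, hpg, hgmin⟩ := circ_compact.exists_isMinOn hne hgc.continuousOn
  have hηpos : 0 < Qf A B C pg - (n pg)^2 := by linarith [hlt pg hpg]
  set η := Qf A B C pg - (n pg)^2 with hηdef
  have hfeas' : Feas n (A - η) B (C - η) := by
    apply feas_of_circ hhom
    intro u hu
    have hg := isMinOn_iff.1 hgmin u hu
    have hre : Qf (A - η) B (C - η) u = Qf A B C u - η := by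
      simp only [Qf]; linear_combination (-η) * hu
    rw [hre]
    linarith [hg]
  have := hminimal _ _ _ hfeas'
  linarith

private lemma second_contact (hcont : Continuous n)
    (hhom : ∀ (c : ℝ) (p : ℝ × ℝ), n (c • p) = |c| * n p)
    {m : ℝ} (hm : 0 < m) (hlow : ∀ p : ℝ × ℝ, m^2*(p.1^2+p.2^2) ≤ (n p)^2)
    {A B C : ℝ} (hfeas : Feas n A B C)
    (hminimal : ∀ A' B' C', Feas n A' B' C' → A + C ≤ A' + C')
    {w : ℝ × ℝ} (hw : w.1^2 + w.2^2 = 1) (hwc : (n w)^2 = Qf A B C w) :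
    ∃ v : ℝ × ℝ, v.1^2 + v.2^2 = 1 ∧ (n v)^2 = Qf A B C v ∧ v ≠ w ∧ v ≠ -w := by
  by_contra hc
  push_neg at hc
  have honly : ∀ v : ℝ × ℝ, v.1^2+v.2^2 = 1 → (n v)^2 = Qf A B C v → v = w ∨ v = -w := by
    intro v hv1 hv2
    by_contra hvv
    push_neg at hvv
    exact hvv.2 (hc v hv1 hv2 hvv.1)
  set a1 := A*w.1 + B*w.2 with ha1
  set a2 := B*w.1 + C*w.2 with ha2
  have hκa : Qf A B C w = a1*w.1 + a2*w.2 := by simp only [ha1, ha2, Qf]; ring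
  have hκpos : 0 < a1*w.1 + a2*w.2 := by
    rw [← hκa, ← hwc]
    have := hlow w
    nlinarith [this, hw]
  set μ := a1^2 + a2^2 + 1 with hμ
  have hμpos : 0 < μ := by positivity
  set ΔA := a1^2 - μ*w.2^2 with hΔA
  set ΔB := a1*a2 + μ*w.1*w.2 with hΔB
  set ΔC := a2^2 - μ*w.1^2 with hΔC
  have hR : ∀ p : ℝ × ℝ, Qf ΔA ΔB ΔC p =
      (a1*p.1 + a2*p.2)^2 - μ*(w.1*p.2 - w.2*p.1)^2 := by
    intro p; simp only [Qf, hΔA, hΔB, hΔC]; ring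
  have contra : ∀ t : ℝ, 0 < t →
      (∀ u : ℝ × ℝ, u.1^2+u.2^2 = 1 → (n u)^2 ≤ Qf A B C u + t * Qf ΔA ΔB ΔC u) → False := by
    intro t ht hcf
    have hfeas' : Feas n (A + t*ΔA) (B + t*ΔB) (C + t*ΔC) := by
      apply feas_of_circ hhom
      intro u hu
      have heq : Qf (A + t*ΔA) (B + t*ΔB) (C + t*ΔC) u
          = Qf A B C u + t * Qf ΔA ΔB ΔC u := by simp only [Qf]; ring
      rw [heq]
      exact hcf u hu
    have hmin := hminimal _ _ _ hfeas'
    have htr : ΔA + ΔC = -1 := by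
      simp only [hΔA, hΔC, hμ]
      nlinarith [hw]
    nlinarith [hmin, htr, ht]
  set G : Set (ℝ × ℝ) := {p : ℝ × ℝ | p.1^2+p.2^2 = 1} ∩
    {p : ℝ × ℝ | (a1*p.1 + a2*p.2)^2 ≤ μ*(w.1*p.2 - w.2*p.1)^2} with hG
  have hGmem : ∀ p : ℝ × ℝ, p ∈ G ↔
      (p.1^2+p.2^2 = 1 ∧ (a1*p.1 + a2*p.2)^2 ≤ μ*(w.1*p.2 - w.2*p.1)^2) := by
    intro p
    rw [hG, Set.mem_inter_iff, Set.mem_setOf_eq, Set.mem_setOf_eq]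
  have hGw : w ∉ G ∧ -w ∉ G := by
    constructor
    · intro hmem
      have h := ((hGmem w).1 hmem).2
      have h0 : w.1*w.2 - w.2*w.1 = 0 := by ring
      rw [h0] at h
      nlinarith [hκpos, h, mul_pos hκpos hκpos]
    · intro hmem
      have h := ((hGmem (-w)).1 hmem).2
      have h1 : (-w).1 = -w.1 := rfl
      have h2 : (-w).2 = -w.2 := rfl
      rw [h1, h2] at h
      have h0 : w.1*(-w.2) - w.2*(-w.1) = 0 := by ring
      rw [h0] at h
      nlinarith [hκpos, h, mul_pos hκpos hκpos]
  rcases Set.eq_empty_or_nonempty G with hGe | hGne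
  · apply contra 1 one_pos
    intro u hu
    have huG : u ∉ G := by rw [hGe]; exact Set.notMem_empty u
    rw [hGmem] at huG
    push_neg at huG
    have hpos := (huG hu).le
    rw [hR]
    nlinarith [hfeas u, hpos]  -- G empty branch
  · have hGcompact : IsCompact G := by
      apply IsCompact.of_isClosed_subset circ_compact
      · exact (isClosed_eq (by fun_prop) continuous_const).inter
          (isClosed_le (by fun_prop) (by fun_prop))
      · exact fun p hp => hp.1
    have hgc : Continuous fun p : ℝ × ℝ => Qf A B C p - (n p)^2 :=
      (Qf_cont A B C).sub (by fun_prop)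
    obtain ⟨pg, hpg, hgmin⟩ := hGcompact.exists_isMinOn hGne hgc.continuousOn
    have hηpos : 0 < Qf A B C pg - (n pg)^2 := by
      rcases lt_or_eq_of_le (hfeas pg) with h | h
      · linarith
      · exfalso
        have hpgc := (hGmem pg).1 hpg
        rcases honly pg hpgc.1 h with rfl | rfl
        · exact hGw.1 hpg
        · exact hGw.2 hpg
    set η := Qf A B C pg - (n pg)^2 with hηdef
    set ρ := a1^2 + a2^2 + μ + 1 with hρ
    have hρpos : 0 < ρ := by positivity
    have hηρ : 0 < η/ρ := by positivity
    apply contra (η/ρ) hηρ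
    intro u hu
    have hb1 : (a1*u.1 + a2*u.2)^2 ≤ a1^2 + a2^2 := by
      nlinarith [sq_nonneg (a1*u.2 - a2*u.1), hu, sq_nonneg a1, sq_nonneg a2]
    have hb2 : (w.1*u.2 - w.2*u.1)^2 ≤ 1 := by
      nlinarith [sq_nonneg (w.1*u.1 + w.2*u.2), hu, hw]
    have hRub : Qf ΔA ΔB ΔC u ≤ ρ - 1 := by
      rw [hR, hρ]
      nlinarith [hb1, sq_nonneg (w.1*u.2 - w.2*u.1), hμpos]
    have hRlb : -(ρ-1) ≤ Qf ΔA ΔB ΔC u := by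
      rw [hR, hρ]
      have h2 : μ*(w.1*u.2 - w.2*u.1)^2 ≤ μ := by nlinarith [hb2, hμpos]
      nlinarith [sq_nonneg (a1*u.1 + a2*u.2), h2]
    by_cases huG : u ∈ G
    · have hmarg := isMinOn_iff.1 hgmin u huG
      have h2 : (η/ρ) * (-(ρ-1)) ≤ (η/ρ) * Qf ΔA ΔB ΔC u :=
        mul_le_mul_of_nonneg_left hRlb hηρ.le
      have h3 : (η/ρ) * (-(ρ-1)) = -η + η/ρ := by field_simp; ring
      calc (n u)^2 ≤ Qf A B C u - η := by linarith [hmarg]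
        _ ≤ Qf A B C u + (-η + η/ρ) := by linarith [hηρ]
        _ = Qf A B C u + (η/ρ) * (-(ρ-1)) := by rw [h3]
        _ ≤ Qf A B C u + (η/ρ) * Qf ΔA ΔB ΔC u := by linarith [h2]
    · rw [hGmem] at huG
      push_neg at huG
      have hpos := (huG hu).le
      have h4 : 0 ≤ (η/ρ) * Qf ΔA ΔB ΔC u := by
        apply mul_nonneg hηρ.le
        rw [hR]
        linarith [hpos]
      linarith [hfeas u, h4]

private lemma normalize_contact
    (hhom : ∀ (c : ℝ) (p : ℝ × ℝ), n (c • p) = |c| * n p)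
    (hnn : ∀ p, 0 ≤ n p)
    {m : ℝ} (hm : 0 < m) (hlow : ∀ p : ℝ × ℝ, m^2*(p.1^2+p.2^2) ≤ (n p)^2)
    {A B C : ℝ} {v : ℝ × ℝ} (hv : v ≠ 0) (hc : (n v)^2 = Qf A B C v) :
    ∃ s : ℝ, 0 < s ∧ Qf A B C (s • v) = 1 ∧ n (s • v) = 1 := by
  have hq : 0 < Qf A B C v := by
    rw [← hc]
    exact lt_of_lt_of_le (mul_pos (pow_pos hm 2) (e_pos hv)) (hlow v)
  refine ⟨(Real.sqrt (Qf A B C v))⁻¹, by positivity, ?_, ?_⟩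
  · rw [Qf_smul]
    rw [← Real.sqrt_inv]
    rw [Real.sq_sqrt (by positivity)]
    field_simp
  · have h1 : n ((Real.sqrt (Qf A B C v))⁻¹ • v)
        = |(Real.sqrt (Qf A B C v))⁻¹| * n v := hhom _ _
    rw [h1, abs_of_pos (by positivity)]
    have h2 : ((Real.sqrt (Qf A B C v))⁻¹ * n v)^2 = 1 := by
      rw [mul_pow, ← Real.sqrt_inv, Real.sq_sqrt (by positivity), hc]
      field_simp
    nlinarith [h2, mul_nonneg (by positivity : (0:ℝ) ≤ (Real.sqrt (Qf A B C v))⁻¹) (hnn v)]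

private lemma indep_of_ne {w v : ℝ × ℝ} (hw : w.1^2 + w.2^2 = 1) (hv : v.1^2 + v.2^2 = 1)
    (h1 : v ≠ w) (h2 : v ≠ -w) : w.1*v.2 - w.2*v.1 ≠ 0 := by
  intro hdet
  obtain ⟨c, hcdef⟩ : ∃ c : ℝ, c = w.1*v.1 + w.2*v.2 := ⟨_, rfl⟩
  have hv1 : c*w.1 = v.1 := by rw [hcdef]; linear_combination v.1*hw + w.2*hdet
  have hv2 : c*w.2 = v.2 := by rw [hcdef]; linear_combination v.2*hw - w.1*hdet
  have h1' : c^2*(w.1^2 + w.2^2) = 1 := by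
    calc c^2*(w.1^2+w.2^2) = (c*w.1)^2 + (c*w.2)^2 := by ring
      _ = v.1^2 + v.2^2 := by rw [hv1, hv2]
      _ = 1 := hv
  have hc2 : (c-1)*(c+1) = 0 := by linear_combination h1' - c^2 * hw
  rcases mul_eq_zero.mp hc2 with h | h
  · apply h1
    have hceq : c = 1 := by linarith
    rw [hceq] at hv1 hv2
    exact Prod.ext (by linarith) (by linarith)
  · apply h2
    have hceq : c = -1 := by linarith
    rw [hceq] at hv1 hv2
    have e1 : (-w).1 = -w.1 := rfl
    have e2 : (-w).2 = -w.2 := rfl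
    exact Prod.ext (by rw [e1]; linarith) (by rw [e2]; linarith)

private lemma ortho_contacts
    (hhom : ∀ (c : ℝ) (p : ℝ × ℝ), n (c • p) = |c| * n p)
    (hnn : ∀ p, 0 ≤ n p)
    {m : ℝ} (hm : 0 < m) (hlow : ∀ p : ℝ × ℝ, m^2*(p.1^2+p.2^2) ≤ (n p)^2)
    {A B C : ℝ} (hfeas : Feas n A B C)
    (hF2 : ∀ p q : ℝ × ℝ, 4 * n p * n q ≤ (n (p+q))^2 + (n (p-q))^2)
    {w v : ℝ × ℝ} (hw : w.1^2+w.2^2 = 1) (hv : v.1^2+v.2^2 = 1)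
    (hwc : (n w)^2 = Qf A B C w) (hvc : (n v)^2 = Qf A B C v)
    (h1 : v ≠ w) (h2 : v ≠ -w) :
    ∃ c₁ c₂ : ℝ × ℝ, n c₁ = 1 ∧ n c₂ = 1 ∧ Qf A B C c₁ = 1 ∧ Qf A B C c₂ = 1 ∧
      A*c₁.1*c₂.1 + B*(c₁.1*c₂.2 + c₁.2*c₂.1) + C*c₁.2*c₂.2 = 0 ∧
      c₁.1*c₂.2 - c₁.2*c₂.1 ≠ 0 := by
  have hdet := indep_of_ne hw hv h1 h2
  have hw0 : w ≠ 0 := by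
    intro h; rw [h] at hw; norm_num at hw
  have hv0 : v ≠ 0 := by
    intro h; rw [h] at hv; norm_num at hv
  obtain ⟨s₁, hs₁, hqwa, hnwa⟩ := normalize_contact hhom hnn hm hlow hw0 hwc
  obtain ⟨s₂, hs₂, hqvb, hnvb⟩ := normalize_contact hhom hnn hm hlow hv0 hvc
  set wa := s₁ • w with hwadef
  set vb := s₂ • v with hvbdef
  have cwa1 : wa.1 = s₁ * w.1 := rfl
  have cwa2 : wa.2 = s₁ * w.2 := rfl
  have cvb1 : vb.1 = s₂ * v.1 := rfl
  have cvb2 : vb.2 = s₂ * v.2 := rfl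
  have hdet2 : wa.1*vb.2 - wa.2*vb.1 ≠ 0 := by
    rw [cwa1, cwa2, cvb1, cvb2]
    intro h
    apply hdet
    have hs₁₂ : s₁ * s₂ ≠ 0 := mul_ne_zero hs₁.ne' hs₂.ne'
    apply mul_left_cancel₀ hs₁₂
    rw [mul_zero]
    linear_combination h
  -- the two bisector vectors
  have hsum : Qf A B C (wa + vb) + Qf A B C (wa - vb) = 4 := by
    have hx : Qf A B C (wa + vb) + Qf A B C (wa - vb)
        = 2 * Qf A B C wa + 2 * Qf A B C vb := by
      simp only [Qf, Prod.fst_add, Prod.snd_add, Prod.fst_sub, Prod.snd_sub]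
      ring
    rw [hx, hqwa, hqvb]; norm_num
  have hf2 := hF2 wa vb
  rw [hnwa, hnvb] at hf2
  have hfeP := hfeas (wa + vb)
  have hfeM := hfeas (wa - vb)
  have hceP : (n (wa + vb))^2 = Qf A B C (wa + vb) := by linarith
  have hceM : (n (wa - vb))^2 = Qf A B C (wa - vb) := by linarith
  have huP0 : wa + vb ≠ 0 := by
    intro h
    apply hdet2
    have e1 : wa.1 + vb.1 = 0 := congrArg Prod.fst h
    have e2 : wa.2 + vb.2 = 0 := congrArg Prod.snd h
    linear_combination (-wa.2)*e1 + wa.1*e2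
  have huM0 : wa - vb ≠ 0 := by
    intro h
    apply hdet2
    have e1 : wa.1 - vb.1 = 0 := congrArg Prod.fst h
    have e2 : wa.2 - vb.2 = 0 := congrArg Prod.snd h
    linear_combination wa.2*e1 - wa.1*e2
  obtain ⟨s₃, hs₃, hqc₁, hnc₁⟩ := normalize_contact hhom hnn hm hlow huP0 hceP
  obtain ⟨s₄, hs₄, hqc₂, hnc₂⟩ := normalize_contact hhom hnn hm hlow huM0 hceM
  refine ⟨s₃ • (wa + vb), s₄ • (wa - vb), hnc₁, hnc₂, hqc₁, hqc₂, ?_, ?_⟩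
  · have d11 : (s₃ • (wa + vb)).1 = s₃ * (wa.1 + vb.1) := rfl
    have d12 : (s₃ • (wa + vb)).2 = s₃ * (wa.2 + vb.2) := rfl
    have d21 : (s₄ • (wa - vb)).1 = s₄ * (wa.1 - vb.1) := rfl
    have d22 : (s₄ • (wa - vb)).2 = s₄ * (wa.2 - vb.2) := rfl
    rw [d11, d12, d21, d22]
    have horth0 : A*(wa.1+vb.1)*(wa.1-vb.1) + B*((wa.1+vb.1)*(wa.2-vb.2) + (wa.2+vb.2)*(wa.1-vb.1))
        + C*(wa.2+vb.2)*(wa.2-vb.2) = Qf A B C wa - Qf A B C vb := by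
      simp only [Qf]; ring
    have : Qf A B C wa - Qf A B C vb = 0 := by rw [hqwa, hqvb]; ring
    linear_combination (s₃*s₄) * (horth0.trans this)
  · have d11 : (s₃ • (wa + vb)).1 = s₃ * (wa.1 + vb.1) := rfl
    have d12 : (s₃ • (wa + vb)).2 = s₃ * (wa.2 + vb.2) := rfl
    have d21 : (s₄ • (wa - vb)).1 = s₄ * (wa.1 - vb.1) := rfl
    have d22 : (s₄ • (wa - vb)).2 = s₄ * (wa.2 - vb.2) := rfl
    rw [d11, d12, d21, d22]
    intro h
    apply hdet2
    have hs₃₄ : s₃ * s₄ * 2 ≠ 0 := by positivity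
    apply mul_left_cancel₀ hs₃₄
    rw [mul_zero]
    linear_combination (-1) * h

private lemma nsq_eq_qf
    (hcont : Continuous n)
    (hnn : ∀ p, 0 ≤ n p)
    (hhom : ∀ (c : ℝ) (p : ℝ × ℝ), n (c • p) = |c| * n p)
    (hF2 : ∀ p q : ℝ × ℝ, 4 * n p * n q ≤ (n (p+q))^2 + (n (p-q))^2)
    {A B C : ℝ} (hfeas : Feas n A B C)
    {c₁ c₂ : ℝ × ℝ} (hn1 : n c₁ = 1) (hn2 : n c₂ = 1)
    (hq1 : Qf A B C c₁ = 1) (hq2 : Qf A B C c₂ = 1)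
    (horth : A*c₁.1*c₂.1 + B*(c₁.1*c₂.2 + c₁.2*c₂.1) + C*c₁.2*c₂.2 = 0)
    (hdet : c₁.1*c₂.2 - c₁.2*c₂.1 ≠ 0) :
    ∀ p : ℝ × ℝ, (n p)^2 = Qf A B C p := by
  have hq1' : A*c₁.1^2 + 2*B*c₁.1*c₁.2 + C*c₁.2^2 = 1 := hq1
  have hq2' : A*c₂.1^2 + 2*B*c₂.1*c₂.2 + C*c₂.2^2 = 1 := hq2
  have vecq : ∀ a b : ℝ, Qf A B C (a • c₁ + b • c₂) = a^2 + b^2 := by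
    intro a b
    have e1 : (a • c₁ + b • c₂).1 = a*c₁.1 + b*c₂.1 := rfl
    have e2 : (a • c₁ + b • c₂).2 = a*c₁.2 + b*c₂.2 := rfl
    simp only [Qf, e1, e2]
    linear_combination a^2*hq1' + b^2*hq2' + (2*a*b)*horth
  set ν : ℝ → ℝ := fun θ => n (cos θ • c₁ + sin θ • c₂) with hνdef
  have hνcont : Continuous ν := by
    apply hcont.comp
    exact (Real.continuous_cos.smul continuous_const).add
      (Real.continuous_sin.smul continuous_const)
  have hνnn : ∀ θ, 0 ≤ ν θ := fun θ => hnn _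
  have hνle : ∀ θ, (ν θ)^2 ≤ 1 := by
    intro θ
    have := hfeas (cos θ • c₁ + sin θ • c₂)
    rw [vecq] at this
    simpa [sin_sq_add_cos_sq] using this
  -- midpoint property
  have hmid : ∀ θ₁ θ₂, ν θ₁ = 1 → ν θ₂ = 1 → |θ₁ - θ₂| < π → ν ((θ₁+θ₂)/2) = 1 := by
    intro θ₁ θ₂ h1 h2 hd
    set u := cos θ₁ • c₁ + sin θ₁ • c₂ with hu
    set w := cos θ₂ • c₁ + sin θ₂ • c₂ with hw
    have huw : u + w = (cos θ₁ + cos θ₂) • c₁ + (sin θ₁ + sin θ₂) • c₂ := by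
      rw [hu, hw]; module
    have huw' : u - w = (cos θ₁ - cos θ₂) • c₁ + (sin θ₁ - sin θ₂) • c₂ := by
      rw [hu, hw]; module
    have hqP : Qf A B C (u + w) = 2 + 2*cos (θ₁ - θ₂) := by
      rw [huw, vecq, Real.cos_sub]
      linear_combination (sin_sq_add_cos_sq θ₁) + (sin_sq_add_cos_sq θ₂)
    have hqM : Qf A B C (u - w) = 2 - 2*cos (θ₁ - θ₂) := by
      rw [huw', vecq, Real.cos_sub]
      linear_combination (sin_sq_add_cos_sq θ₁) + (sin_sq_add_cos_sq θ₂)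
    have hf2 := hF2 u w
    rw [show n u = 1 from h1, show n w = 1 from h2] at hf2
    have hfP := hfeas (u + w)
    have hfM := hfeas (u - w)
    rw [hqP] at hfP
    rw [hqM] at hfM
    have heP : (n (u+w))^2 = 2 + 2*cos (θ₁ - θ₂) := by linarith
    -- the half-angle direction
    have hcpos : 0 < cos ((θ₁ - θ₂)/2) := by
      apply Real.cos_pos_of_mem_Ioo
      constructor
      · have := (abs_lt.1 hd).1; linarith
      · have := (abs_lt.1 hd).2; linarith
    have hvec : u + w = (2 * cos ((θ₁-θ₂)/2)) •
        (cos ((θ₁+θ₂)/2) • c₁ + sin ((θ₁+θ₂)/2) • c₂) := by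
      rw [huw, Real.cos_add_cos θ₁ θ₂, sinsum θ₁ θ₂]
      module
    have hnval : n (u + w) = 2 * cos ((θ₁-θ₂)/2) * ν ((θ₁+θ₂)/2) := by
      rw [hvec, hhom, abs_of_pos (by positivity : (0:ℝ) < 2 * cos ((θ₁-θ₂)/2))]
    have hsq : (2 * cos ((θ₁-θ₂)/2))^2 = 2 + 2*cos (θ₁ - θ₂) := by
      have := cossqhalf (θ₁ - θ₂)
      nlinarith [this]
    have hpos : (0:ℝ) < 2 + 2*cos (θ₁ - θ₂) := by
      rw [← hsq]; exact pow_pos (by linarith) 2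
    have h5 : (2 + 2*cos (θ₁ - θ₂)) * (ν ((θ₁+θ₂)/2))^2 = (2 + 2*cos (θ₁ - θ₂)) * 1 := by
      rw [mul_one, ← hsq, ← mul_pow, ← hnval, hsq]
      exact heP
    have hν2 : (ν ((θ₁+θ₂)/2))^2 = 1 := mul_left_cancel₀ hpos.ne' h5
    nlinarith [hν2, hνnn ((θ₁+θ₂)/2)]
  -- base points
  have hν0 : ν 0 = 1 := by
    simp only [hνdef]
    rw [Real.cos_zero, Real.sin_zero, one_smul, zero_smul, add_zero]
    exact hn1
  have hνpi2 : ν (π/2) = 1 := by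
    simp only [hνdef]
    rw [Real.cos_pi_div_two, Real.sin_pi_div_two, one_smul, zero_smul, zero_add]
    exact hn2
  have hνpi : ν π = 1 := by
    simp only [hνdef]
    rw [Real.cos_pi, Real.sin_pi, zero_smul, add_zero]
    have : ((-1:ℝ)) • c₁ = (-1:ℝ) • c₁ := rfl
    rw [hhom]
    simp [hn1]
  have hνmpi2 : ν (-(π/2)) = 1 := by
    simp only [hνdef]
    rw [Real.cos_neg, Real.sin_neg, Real.cos_pi_div_two, Real.sin_pi_div_two,
      zero_smul, zero_add]
    rw [show (-(1:ℝ)) • c₂ = ((-1:ℝ)) • c₂ from rfl, hhom]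
    simp [hn2]
  have hνmpi : ν (-π) = 1 := by
    simp only [hνdef]
    rw [Real.cos_neg, Real.sin_neg, Real.cos_pi, Real.sin_pi, neg_zero, zero_smul, add_zero]
    rw [show (-(1:ℝ)) • c₁ = ((-1:ℝ)) • c₁ from rfl, hhom]
    simp [hn1]
  -- cover [-π, π]
  have hπ := Real.pi_pos
  have cover : ∀ θ ∈ Set.Icc (-π) π, ν θ = 1 := by
    intro θ hθ
    rcases le_or_gt θ (-(π/2)) with h | h
    · exact seg_lemma ν hνcont hmid hνmpi hνmpi2 (by linarith) (by ring_nf; linarith) θ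
        ⟨hθ.1, h⟩
    rcases le_or_gt θ 0 with h' | h'
    · exact seg_lemma ν hνcont hmid hνmpi2 hν0 (by linarith) (by linarith) θ ⟨h.le, h'⟩
    rcases le_or_gt θ (π/2) with h'' | h''
    · exact seg_lemma ν hνcont hmid hν0 hνpi2 (by linarith) (by linarith) θ ⟨h'.le, h''⟩
    · exact seg_lemma ν hνcont hmid hνpi2 hνpi (by linarith) (by ring_nf; linarith) θ
        ⟨h''.le, hθ.2⟩
  -- conclusion
  intro p
  rcases eq_or_ne p 0 with rfl | hp
  · rw [n_zero hhom]
    simp [Qf]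
  · set D := c₁.1*c₂.2 - c₁.2*c₂.1 with hD
    set α := (p.1*c₂.2 - p.2*c₂.1)/D with hα
    set β := (c₁.1*p.2 - c₁.2*p.1)/D with hβ
    have hpd : p = α • c₁ + β • c₂ := by
      have e1 : (α • c₁ + β • c₂).1 = α*c₁.1 + β*c₂.1 := rfl
      have e2 : (α • c₁ + β • c₂).2 = α*c₁.2 + β*c₂.2 := rfl
      apply Prod.ext
      · rw [e1, hα, hβ, hD, div_mul_eq_mul_div, div_mul_eq_mul_div, ← add_div, eq_div_iff (show c₁.1*c₂.2 - c₁.2*c₂.1 ≠ 0 from hdet)]; ring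
      · rw [e2, hα, hβ, hD, div_mul_eq_mul_div, div_mul_eq_mul_div, ← add_div, eq_div_iff (show c₁.1*c₂.2 - c₁.2*c₂.1 ≠ 0 from hdet)]; ring
    have hαβ : ¬(α = 0 ∧ β = 0) := by
      rintro ⟨h1, h2⟩
      apply hp
      rw [hpd, h1, h2, zero_smul, zero_smul, add_zero]
    have hr2 : 0 < α^2 + β^2 := by
      rcases (not_and_or.1 hαβ) with h | h
      · have : α ≠ 0 := h
        positivity
      · have : β ≠ 0 := h
        positivity
    set r := Real.sqrt (α^2 + β^2) with hr
    have hrpos : 0 < r := Real.sqrt_pos.2 hr2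
    have hrsq : r^2 = α^2 + β^2 := Real.sq_sqrt hr2.le
    have hbound : -1 ≤ α/r ∧ α/r ≤ 1 := by
      constructor
      · rw [le_div_iff₀ hrpos]
        nlinarith [hrsq, sq_nonneg β, hrpos]
      · rw [div_le_one hrpos]
        nlinarith [hrsq, sq_nonneg β, hrpos]
    have key : ∀ θ, cos θ = α/r → sin θ = β/r → θ ∈ Set.Icc (-π) π → (n p)^2 = Qf A B C p := by
      intro θ hcos hsin hθmem
      have hvecp : p = r • (cos θ • c₁ + sin θ • c₂) := by
        rw [hcos, hsin, hpd]
        rw [smul_add, smul_smul, smul_smul]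
        rw [mul_div_cancel₀ _ hrpos.ne', mul_div_cancel₀ _ hrpos.ne']
      have hν := cover θ hθmem
      have : n p = r := by
        rw [hvecp, hhom, abs_of_pos hrpos]
        have : n (cos θ • c₁ + sin θ • c₂) = ν θ := rfl
        rw [this, hν, mul_one]
      rw [this, hrsq]
      conv_rhs => rw [hpd]
      rw [show (α • c₁ + β • c₂ : ℝ × ℝ) = α • c₁ + β • c₂ from rfl, vecq]
    rcases le_or_gt 0 β with hβpos | hβneg
    · apply key (Real.arccos (α/r))
      · exact Real.cos_arccos hbound.1 hbound.2
      · rw [Real.sin_arccos]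
        have hcomp : 1 - (α/r)^2 = (β/r)^2 := by
          field_simp
          nlinarith [hrsq]
        rw [hcomp, Real.sqrt_sq (div_nonneg hβpos hrpos.le)]
      · constructor
        · linarith [Real.arccos_nonneg (α/r)]
        · exact Real.arccos_le_pi (α/r)
    · apply key (-(Real.arccos (α/r)))
      · rw [Real.cos_neg]; exact Real.cos_arccos hbound.1 hbound.2
      · rw [Real.sin_neg, Real.sin_arccos]
        have hcomp : 1 - (α/r)^2 = (β/r)^2 := by
          field_simp
          nlinarith [hrsq]
        rw [hcomp]
        have h6 : 0 ≤ -(β/r) := by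
          apply neg_nonneg.mpr
          apply div_nonpos_of_nonpos_of_nonneg hβneg.le hrpos.le
        rw [show ((β/r)^2 : ℝ) = (-(β/r))^2 by ring, Real.sqrt_sq h6]
        ring
      · constructor
        · simp only [neg_le_neg_iff]; exact Real.arccos_le_pi (α/r)
        · linarith [Real.arccos_nonneg (α/r)]

private lemma nsq_parallelogram
    (hcont : Continuous n)
    (hnn : ∀ p, 0 ≤ n p)
    (hzero : ∀ p, n p = 0 → p = 0)
    (hhom : ∀ (c : ℝ) (p : ℝ × ℝ), n (c • p) = |c| * n p)
    (hF2 : ∀ p q : ℝ × ℝ, 4 * n p * n q ≤ (n (p+q))^2 + (n (p-q))^2) :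
    ∀ p q : ℝ × ℝ, (n (p+q))^2 + (n (p-q))^2 = 2*(n p)^2 + 2*(n q)^2 := by
  obtain ⟨m, M, hm, hM, hb⟩ := bounds hcont hnn hzero hhom
  have hlow : ∀ p : ℝ × ℝ, m^2*(p.1^2+p.2^2) ≤ (n p)^2 := fun p => (hb p).1
  obtain ⟨A, B, C, hfeas, hminimal⟩ := exists_min_form hnn hm hM hb
  obtain ⟨w, hw, hwc⟩ := exists_contact hcont hhom hfeas hminimal
  obtain ⟨v, hv, hvc, hv1, hv2⟩ := second_contact hcont hhom hm hlow hfeas hminimal hw hwc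
  obtain ⟨c₁, c₂, hn1, hn2, hq1, hq2, horth, hdet⟩ :=
    ortho_contacts hhom hnn hm hlow hfeas hF2 hw hv hwc hvc hv1 hv2
  have hq := nsq_eq_qf hcont hnn hhom hF2 hfeas hn1 hn2 hq1 hq2 horth hdet
  intro p q
  rw [hq, hq, hq, hq]
  simp only [Qf, Prod.fst_add, Prod.snd_add, Prod.fst_sub, Prod.snd_sub]
  ring

end Main

/-- Schoenberg's theorem: a normed real vector space satisfying the Ptolemy
inequality satisfies the parallelogram law, i.e. it is an inner product space. -/
theorem stmt_9 {V : Type*} [NormedAddCommGroup V] [NormedSpace ℝ V]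
    (hpt : ∀ x y z w : V, ‖x - y‖ * ‖z - w‖ ≤ ‖x - z‖ * ‖y - w‖ + ‖x - w‖ * ‖y - z‖) :
    ∀ x y : V, ‖x + y‖ ^ 2 + ‖x - y‖ ^ 2 = 2 * ‖x‖ ^ 2 + 2 * ‖y‖ ^ 2 := by
  have hF2 : ∀ a b : V, 4 * ‖a‖ * ‖b‖ ≤ ‖a + b‖^2 + ‖a - b‖^2 := ptolemy_F2 hpt
  intro x y
  by_cases hx : x = 0
  · subst hx
    rw [zero_add, zero_sub, norm_neg, norm_zero]
    ring
  by_cases hdep : ∃ c : ℝ, y = c • x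
  · obtain ⟨c, rfl⟩ := hdep
    have h1 : x + c • x = (1+c) • x := by module
    have h2 : x - c • x = (1-c) • x := by module
    rw [h1, h2, norm_smul, norm_smul, norm_smul]
    simp only [Real.norm_eq_abs]
    rw [mul_pow, mul_pow, mul_pow, sq_abs, sq_abs, sq_abs]
    ring
  · -- linearly independent case
    set n : ℝ × ℝ → ℝ := fun p => ‖p.1 • x + p.2 • y‖ with hndef
    have hvec : ∀ p q : ℝ × ℝ, (p.1 • x + p.2 • y) + (q.1 • x + q.2 • y)
        = (p+q).1 • x + (p+q).2 • y := by
      intro p q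
      have e1 : (p+q).1 = p.1 + q.1 := rfl
      have e2 : (p+q).2 = p.2 + q.2 := rfl
      rw [e1, e2]; module
    have hvecs : ∀ p q : ℝ × ℝ, (p.1 • x + p.2 • y) - (q.1 • x + q.2 • y)
        = (p-q).1 • x + (p-q).2 • y := by
      intro p q
      have e1 : (p-q).1 = p.1 - q.1 := rfl
      have e2 : (p-q).2 = p.2 - q.2 := rfl
      rw [e1, e2]; module
    have hcont : Continuous n := by
      apply Continuous.norm
      exact (continuous_fst.smul continuous_const).add (continuous_snd.smul continuous_const)
    have hnn : ∀ p, 0 ≤ n p := fun p => norm_nonneg _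
    have hzero : ∀ p, n p = 0 → p = 0 := by
      intro p hp
      have hv : p.1 • x + p.2 • y = 0 := norm_eq_zero.1 hp
      have hp2 : p.2 = 0 := by
        by_contra hp2
        apply hdep
        refine ⟨-(p.1/p.2), ?_⟩
        have : y = p.2⁻¹ • (p.2 • y) := by rw [smul_smul, inv_mul_cancel₀ hp2, one_smul]
        rw [this]
        have h5 : p.2 • y = -(p.1 • x) := by
          rw [eq_neg_iff_add_eq_zero, add_comm]; exact hv
        rw [h5]
        rw [smul_neg, smul_smul, div_eq_inv_mul, neg_smul]
      rw [hp2, zero_smul, add_zero] at hv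
      have hp1 : p.1 = 0 := by
        rcases smul_eq_zero.1 hv with h | h
        · exact h
        · exact absurd h hx
      exact Prod.ext hp1 hp2
    have hhom : ∀ (c : ℝ) (p : ℝ × ℝ), n (c • p) = |c| * n p := by
      intro c p
      have e1 : (c • p).1 = c * p.1 := rfl
      have e2 : (c • p).2 = c * p.2 := rfl
      simp only [hndef, e1, e2, mul_smul, ← smul_add]
      rw [norm_smul, Real.norm_eq_abs]
    have hF2n : ∀ p q : ℝ × ℝ, 4 * n p * n q ≤ (n (p+q))^2 + (n (p-q))^2 := by
      intro p q
      have := hF2 (p.1 • x + p.2 • y) (q.1 • x + q.2 • y)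
      rw [hvec, hvecs] at this
      exact this
    have hpar := nsq_parallelogram hcont hnn hzero hhom hF2n (1,0) (0,1)
    have e1 : ((1:ℝ),(0:ℝ)) + (0,1) = (1,1) := by norm_num
    have e2 : ((1:ℝ),(0:ℝ)) - (0,1) = (1,-1) := by norm_num
    rw [e1, e2] at hpar
    have v1 : n (1,1) = ‖x + y‖ := by
      simp only [hndef]; norm_num
    have v2 : n (1,-1) = ‖x - y‖ := by
      simp only [hndef]
      have : (1:ℝ) • x + (-1:ℝ) • y = x - y := by module
      rw [this]
    have v3 : n (1,0) = ‖x‖ := by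
      simp only [hndef]; norm_num
    have v4 : n (0,1) = ‖y‖ := by
      simp only [hndef]; norm_num
    rw [v1, v2, v3, v4] at hpar
    linarith
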